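/- For every natural number n > 4, the F2-rank of the line graph of the complete graph K_n is at most n−2 if n is even, and at most n−1 if n is odd. -/

import Mathlib

open Matrix in
open scoped Classical in
private lemma rank_le_of_ker' {m : ℕ} (K : Matrix (Fin m) (Fin m) (ZMod 2)) (v : Fin m → ZMod 2)
    (hv : v ≠ 0) (h : K.mulVec v = 0) : K.rank ≤ m - 1 := by
  have hmem : v ∈ LinearMap.ker K.mulVecLin := by simpa [Matrix.mulVecLin] using h
  have hker : 0 < Module.finrank (ZMod 2) (LinearMap.ker K.mulVecLin) :=
    Module.finrank_pos_iff.mpr ⟨⟨⟨v, hmem⟩, 0, by simp [Subtype.ext_iff, hv]⟩⟩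
  have := LinearMap.finrank_range_add_finrank_ker K.mulVecLin
  simp only [Module.finrank_fintype_fun_eq_card, Fintype.card_fin] at this
  have hr : K.rank = Module.finrank (ZMod 2) (LinearMap.range K.mulVecLin) := rfl
  omega

open scoped Classical in
private lemma sym2_mem_unique {α : Type*} {e f : Sym2 α} (hef : e ≠ f) {v i : α}
    (hve : v ∈ e) (hvf : v ∈ f) (hie : i ∈ e) (hif : i ∈ f) : i = v := by
  by_contra hiv
  have he : e = s(i, v) := (Sym2.mem_and_mem_iff hiv).mp ⟨hie, hve⟩
  have hf : f = s(i, v) := (Sym2.mem_and_mem_iff hiv).mp ⟨hif, hvf⟩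
  exact hef (he.trans hf.symm)

open scoped Classical in
private lemma sym2_filter_card {k : ℕ} {e : Sym2 (Fin k)} (he : ¬ e.IsDiag) :
    (Finset.univ.filter (fun i => i ∈ e)).card = 2 := by
  induction e with
  | _ a b =>
    have hab : a ≠ b := by simpa [Sym2.isDiag_iff_proj_eq] using he
    have : (Finset.univ.filter (fun i => i ∈ s(a, b))) = {a, b} := by
      ext i; simp [Sym2.mem_iff]
    rw [this, Finset.card_insert_of_notMem (by simpa using hab), Finset.card_singleton]

open Matrix

open scoped Classical in
/-- For every `n > 4`, the `F2`-rank of the line graph of the complete graph `K_n` is at most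
`n - 2` if `n` is even, and at most `n - 1` if `n` is odd. -/
theorem stmt_2 (n : ℕ) (hn : 4 < n) :
    ((SimpleGraph.lineGraph (⊤ : SimpleGraph (Fin n))).adjMatrix (ZMod 2)).rank ≤
      if Even n then n - 2 else n - 1 := by
  obtain ⟨m, rfl⟩ : ∃ m, n = m + 1 := ⟨n - 1, by omega⟩
  set V := (⊤ : SimpleGraph (Fin (m + 1))).edgeSet with hV
  -- incidence matrix
  set M : Matrix V (Fin (m + 1)) (ZMod 2) :=
    fun e i => if i ∈ (e : Sym2 (Fin (m + 1))) then 1 else 0 with hM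
  set M₀ : Matrix V (Fin m) (ZMod 2) := fun e i => M e i.castSucc with hM₀
  set E : Matrix (Fin m) (Fin (m + 1)) (ZMod 2) :=
    fun i j => (if j = i.castSucc then 1 else 0) + (if j = Fin.last m then 1 else 0) with hE
  have hnd : ∀ e : V, ¬ (e : Sym2 (Fin (m + 1))).IsDiag := fun e =>
    SimpleGraph.not_isDiag_of_mem_edgeSet _ e.2
  -- row sums of M are 0
  have hrow : ∀ e : V, ∑ i, M e i = 0 := by
    intro e
    rw [hM]
    simp only [Finset.sum_boole]
    rw [sym2_filter_card (hnd e)]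
    rfl
  -- A = M * Mᵀ
  have hA : (SimpleGraph.lineGraph (⊤ : SimpleGraph (Fin (m + 1)))).adjMatrix (ZMod 2)
      = M * Mᵀ := by
    ext e f
    rw [Matrix.mul_apply]
    simp only [Matrix.transpose_apply]
    simp only [hM]
    have : ∀ i, (if i ∈ (e : Sym2 (Fin (m+1))) then (1 : ZMod 2) else 0) *
        (if i ∈ (f : Sym2 (Fin (m+1))) then 1 else 0)
        = if i ∈ (e : Sym2 (Fin (m+1))) ∧ i ∈ (f : Sym2 (Fin (m+1))) then 1 else 0 := by
      intro i; split_ifs with h1 h2 h3 <;> simp_all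
    rw [Finset.sum_congr rfl (fun i _ => this i)]
    simp only [Finset.sum_boole]
    by_cases hef : e = f
    · subst hef
      have : (Finset.univ.filter (fun i => i ∈ (e : Sym2 (Fin (m+1))) ∧
          i ∈ (e : Sym2 (Fin (m+1))))).card = 2 := by
        rw [← sym2_filter_card (hnd e)]; congr 1; ext i; simp
      rw [SimpleGraph.adjMatrix_apply, if_neg (SimpleGraph.irrefl _), this]
      rfl
    · by_cases hsh : ∃ v, v ∈ (e : Sym2 (Fin (m+1))) ∧ v ∈ (f : Sym2 (Fin (m+1)))
      · obtain ⟨v, hve, hvf⟩ := hsh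
        have hadj : (SimpleGraph.lineGraph (⊤ : SimpleGraph (Fin (m+1)))).Adj e f :=
          SimpleGraph.lineGraph_adj_iff_exists.mpr ⟨hef, v, hve, hvf⟩
        have hef' : (e : Sym2 (Fin (m+1))) ≠ (f : Sym2 (Fin (m+1))) := by
          simpa [Subtype.ext_iff] using hef
        have : (Finset.univ.filter (fun i => i ∈ (e : Sym2 (Fin (m+1))) ∧
            i ∈ (f : Sym2 (Fin (m+1))))).card = 1 := by
          rw [Finset.card_eq_one]
          exact ⟨v, by
            ext i
            simp only [Finset.mem_filter, Finset.mem_univ, true_and, Finset.mem_singleton]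
            exact ⟨fun ⟨h1, h2⟩ => sym2_mem_unique hef' hve hvf h1 h2,
              fun h => h ▸ ⟨hve, hvf⟩⟩⟩
        rw [SimpleGraph.adjMatrix_apply, if_pos hadj, this, Nat.cast_one]
      · have hadj : ¬ (SimpleGraph.lineGraph (⊤ : SimpleGraph (Fin (m+1)))).Adj e f := by
          rw [SimpleGraph.lineGraph_adj_iff_exists]
          rintro ⟨-, v, hv1, hv2⟩
          exact hsh ⟨v, hv1, hv2⟩
        have : (Finset.univ.filter (fun i => i ∈ (e : Sym2 (Fin (m+1))) ∧
            i ∈ (f : Sym2 (Fin (m+1))))).card = 0 := by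
          rw [Finset.card_eq_zero]
          ext i
          simp only [Finset.mem_filter, Finset.mem_univ, true_and, Finset.notMem_empty,
            iff_false]
          intro h; exact hsh ⟨i, h⟩
        rw [SimpleGraph.adjMatrix_apply, if_neg hadj, this, Nat.cast_zero]
  -- M factors as M₀ * E
  have hfac : M = M₀ * E := by
    ext e j
    rw [Matrix.mul_apply]
    induction j using Fin.lastCases with
    | last =>
      have hEl : ∀ i : Fin m, E i (Fin.last m) = 1 := by
        intro i
        rw [hE]
        simp [(Fin.castSucc_lt_last i).ne']
      simp only [hEl, mul_one]
      have h1 := hrow e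
      rw [Fin.sum_univ_castSucc] at h1
      have h2 : ∑ i : Fin m, M e i.castSucc = -(M e (Fin.last m)) :=
        eq_neg_of_add_eq_zero_left h1
      rw [hM₀]
      rw [h2, CharTwo.neg_eq]
    | cast k =>
      have hEk : ∀ i : Fin m, E i k.castSucc = if i = k then 1 else 0 := by
        intro i
        rw [hE]
        simp [Fin.castSucc_inj, (Fin.castSucc_lt_last k).ne, eq_comm]
      simp only [hEk, mul_ite, mul_one, mul_zero]
      rw [Finset.sum_ite_eq' Finset.univ k (fun i => M₀ e i)]
      simp [hM₀]
  -- E * Eᵀ = I + J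
  have hEE : E * Eᵀ = fun i j => (if i = j then 1 else 0) + 1 := by
    ext i j
    rw [Matrix.mul_apply]
    simp only [Matrix.transpose_apply]
    simp only [hE]
    have : ∀ k : Fin (m+1),
        ((if k = i.castSucc then (1:ZMod 2) else 0) + (if k = Fin.last m then 1 else 0)) *
        ((if k = j.castSucc then 1 else 0) + (if k = Fin.last m then 1 else 0))
        = (if k = i.castSucc then (if k = j.castSucc then 1 else 0) else 0)
          + (if k = Fin.last m then 1 else 0)
          + ((if k = i.castSucc then (if k = Fin.last m then 1 else 0) else 0)
          + (if k = j.castSucc then (if k = Fin.last m then 1 else 0) else 0)) := by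
      intro k
      have h1 := (Fin.castSucc_lt_last i).ne
      have h2 := (Fin.castSucc_lt_last j).ne
      split_ifs <;> subst_vars <;> ring
    rw [Finset.sum_congr rfl (fun k _ => this k)]
    rw [Finset.sum_add_distrib, Finset.sum_add_distrib, Finset.sum_add_distrib]
    rw [Finset.sum_ite_eq' Finset.univ i.castSucc, Finset.sum_ite_eq' Finset.univ i.castSucc,
      Finset.sum_ite_eq' Finset.univ j.castSucc,
      Finset.sum_ite_eq' Finset.univ (Fin.last m) (fun _ => (1:ZMod 2))]
    simp [Fin.castSucc_inj, (Fin.castSucc_lt_last i).ne, (Fin.castSucc_lt_last j).ne]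
  -- rank bound
  have hrank : ((SimpleGraph.lineGraph (⊤ : SimpleGraph (Fin (m+1)))).adjMatrix
      (ZMod 2)).rank ≤ (E * Eᵀ).rank := by
    rw [hA, hfac, Matrix.transpose_mul, Matrix.mul_assoc, ← Matrix.mul_assoc E]
    exact (Matrix.rank_mul_le_right _ _).trans (Matrix.rank_mul_le_left _ _)
  by_cases hpar : Even (m + 1)
  · rw [if_pos hpar]
    refine hrank.trans ?_
    have hm1 : (m : ZMod 2) = 1 := by
      have h2 : m % 2 = 1 := Nat.odd_iff.mp (Nat.Even.sub_odd (by omega) hpar odd_one)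
      rw [← ZMod.natCast_mod m 2, h2]
      rfl
    have hker : (E * Eᵀ).mulVec (fun _ => 1) = 0 := by
      ext j
      rw [hEE]
      simp only [Matrix.mulVec, dotProduct, mul_one]
      rw [Finset.sum_add_distrib, Finset.sum_ite_eq Finset.univ j (fun _ => (1:ZMod 2))]
      simp [hm1]
      rfl
    have hv : (fun _ : Fin m => (1 : ZMod 2)) ≠ 0 := by
      intro h
      have : (1 : ZMod 2) = 0 := congrFun h ⟨0, by omega⟩
      simp at this
    have := rank_le_of_ker' (E * Eᵀ) _ hv hker
    omega
  · rw [if_neg hpar]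
    refine hrank.trans ?_
    have := Matrix.rank_le_card_width (E * Eᵀ)
    simp only [Fintype.card_fin] at this
    omega
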